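/- For every p ∈ (0,1) and every integer r ≥ 1, lim_{n→∞, n even} P(N_n = r | τ > n, S_n = 0) = r/2^{r+1}; the limit does not depend on p. -/

import Mathlib

open MeasureTheory ProbabilityTheory Filter Real Topology

noncomputable section

/-- Position of the 1D nearest-neighbour walk after `n` steps (started at `0`). -/
def walk1 {Ω : Type*} (ξ : ℕ → Ω → ℤ) (n : ℕ) (ω : Ω) : ℤ :=
  ∑ k ∈ Finset.range n, ξ k ω

/-- `N_n`: the number of returns to `0` up to time `n`, i.e. `#{1 ≤ k ≤ n : S_k = 0}`. -/
def visits {Ω : Type*} (ξ : ℕ → Ω → ℤ) (n : ℕ) (ω : Ω) : ℕ :=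
  ((Finset.Icc 1 n).filter (fun k => walk1 ξ k ω = 0)).card

/-- The event `τ > n`: the walk stays non-negative up to time `n`. -/
def stays1 {Ω : Type*} (ξ : ℕ → Ω → ℤ) (n : ℕ) : Set Ω :=
  {ω | ∀ k ≤ n, 0 ≤ walk1 ξ k ω}

/-- `θ_r`: the time of the `r`-th return to `0`
(`θ_0 = 0`, `θ_{r+1} = inf {n > θ_r : S_n = 0}`). -/
def retTime {Ω : Type*} (ξ : ℕ → Ω → ℤ) : ℕ → Ω → ℕ
  | 0, _ => 0
  | r + 1, ω => sInf {n | retTime ξ r ω < n ∧ walk1 ξ n ω = 0}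

namespace StmtAux

/-! ### Combinatorial part -/

/-- step value of a Bool: `true ↦ +1`, `false ↦ -1`. -/
def val (b : Bool) : ℤ := if b then 1 else -1

@[simp] lemma val_true : val true = 1 := rfl
@[simp] lemma val_false : val false = -1 := rfl

lemma val_injective : Function.Injective val := by
  intro a b h
  cases a <;> cases b <;> simp [val] at h ⊢

/-- partial sum of the first `k` entries of a `Fin m`-tuple of integers. -/
def psum {m : ℕ} (v : Fin m → ℤ) (k : ℕ) : ℤ :=
  ∑ i : Fin m, if (i : ℕ) < k then v i else 0

/-- partial sum of a boolean path. -/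
def S {m : ℕ} (f : Fin m → Bool) (k : ℕ) : ℤ := psum (fun i => val (f i)) k

lemma psum_snoc_le {m : ℕ} (v : Fin m → ℤ) (x : ℤ) {k : ℕ} (hk : k ≤ m) :
    psum (Fin.snoc v x) k = psum v k := by
  unfold psum
  rw [Fin.sum_univ_castSucc]
  simp only [Fin.coe_castSucc, Fin.snoc_castSucc, Fin.val_last, Fin.snoc_last]
  rw [if_neg (by omega), add_zero]

lemma psum_snoc_succ {m : ℕ} (v : Fin m → ℤ) (x : ℤ) :
    psum (Fin.snoc v x) (m + 1) = psum v m + x := by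
  unfold psum
  rw [Fin.sum_univ_castSucc]
  simp only [Fin.coe_castSucc, Fin.snoc_castSucc, Fin.val_last, Fin.snoc_last]
  rw [if_pos (by omega)]
  congr 1
  apply Finset.sum_congr rfl
  intro i _
  rw [if_pos (by omega), if_pos i.isLt]

lemma snoc_val {m : ℕ} (f : Fin m → Bool) (b : Bool) :
    (fun i : Fin (m+1) => val (Fin.snoc (α := fun _ => Bool) f b i))
      = Fin.snoc (fun i => val (f i)) (val b) := by
  funext i
  induction i using Fin.lastCases with
  | last => simp
  | cast j => simp

lemma S_snoc_le {m : ℕ} (f : Fin m → Bool) (b : Bool) {k : ℕ} (hk : k ≤ m) :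
    S (Fin.snoc f b) k = S f k := by
  unfold S
  rw [snoc_val, psum_snoc_le _ _ hk]

lemma S_snoc_succ {m : ℕ} (f : Fin m → Bool) (b : Bool) :
    S (Fin.snoc f b) (m + 1) = S f m + val b := by
  unfold S
  rw [snoc_val, psum_snoc_succ]

/-- number of zeros of the path in times `1..m`. -/
def zeros {m : ℕ} (f : Fin m → Bool) : ℕ :=
  ((Finset.Icc 1 m).filter (fun k => S f k = 0)).card

/-- predicate: nonnegative path ending at `j`. -/
def PM {m : ℕ} (j : ℤ) (f : Fin m → Bool) : Prop :=
  (∀ k ≤ m, 0 ≤ S f k) ∧ S f m = j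

instance {m : ℕ} (j : ℤ) : DecidablePred (PM (m := m) j) := fun _ =>
  instDecidableAnd (dp := Nat.decidableBallLE m _) (dq := decEq _ _)

/-- number of nonnegative paths of length `m` ending at `j`. -/
def Mc (m : ℕ) (j : ℤ) : ℕ := (Finset.univ.filter (PM (m := m) j)).card

/-- number of nonnegative paths of length `m` ending at `j` with `r` zeros. -/
def Nc (m : ℕ) (j : ℤ) (r : ℕ) : ℕ :=
  (Finset.univ.filter (fun f : Fin m → Bool => PM j f ∧ zeros f = r)).card

/-- strictly positive path count, by recursion. -/
def B : ℕ → ℤ → ℕ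
  | 0, j => if j = 0 then 1 else 0
  | (m+1), j => if 1 ≤ j then B m (j-1) + B m (j+1) else 0

lemma snoc_injective {m : ℕ} (b : Bool) :
    Function.Injective (fun g : Fin m → Bool => (Fin.snoc g b : Fin (m+1) → Bool)) := by
  intro g g' h
  funext i
  have := congrFun h (Fin.castSucc i)
  simpa using this

lemma card_filter_snoc (m : ℕ) (Q : (Fin (m+1) → Bool) → Prop) [DecidablePred Q] :
    (Finset.univ.filter Q).card
      = (Finset.univ.filter (fun g : Fin m → Bool => Q (Fin.snoc g true))).card
      + (Finset.univ.filter (fun g : Fin m → Bool => Q (Fin.snoc g false))).card := by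
  have hU : Finset.univ.filter Q
      = ((Finset.univ.filter (fun g : Fin m → Bool => Q (Fin.snoc g true))).image
          (fun g => (Fin.snoc g true : Fin (m+1) → Bool)))
        ∪ ((Finset.univ.filter (fun g : Fin m → Bool => Q (Fin.snoc g false))).image
          (fun g => (Fin.snoc g false : Fin (m+1) → Bool))) := by
    ext f
    simp only [Finset.mem_filter, Finset.mem_univ, true_and, Finset.mem_union,
      Finset.mem_image]
    constructor
    · intro hf
      cases hb : f (Fin.last m) with
      | true =>
          left; exact ⟨Fin.init f, by rw [show Fin.snoc (Fin.init f) true = f by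
            rw [← hb]; exact Fin.snoc_init_self f]; exact ⟨hf, rfl⟩⟩
      | false =>
          right; exact ⟨Fin.init f, by rw [show Fin.snoc (Fin.init f) false = f by
            rw [← hb]; exact Fin.snoc_init_self f]; exact ⟨hf, rfl⟩⟩
    · rintro (⟨g, hg, rfl⟩ | ⟨g, hg, rfl⟩) <;> exact hg
  rw [hU, Finset.card_union_of_disjoint, Finset.card_image_of_injective _ (snoc_injective true),
    Finset.card_image_of_injective _ (snoc_injective false)]
  rw [Finset.disjoint_left]
  rintro x hx hx'
  simp only [Finset.mem_image] at hx hx'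
  obtain ⟨g, -, rfl⟩ := hx
  obtain ⟨g', -, h⟩ := hx'
  have := congrFun h (Fin.last m)
  simp at this

lemma PM_snoc {m : ℕ} {j : ℤ} (hj : 0 ≤ j) (g : Fin m → Bool) (b : Bool) :
    PM j (Fin.snoc g b) ↔ PM (j - val b) g := by
  constructor
  · rintro ⟨h1, h2⟩
    refine ⟨fun k hk => ?_, ?_⟩
    · rw [← S_snoc_le g b hk]; exact h1 k (by omega)
    · rw [S_snoc_succ] at h2; omega
  · rintro ⟨h1, h2⟩
    refine ⟨fun k hk => ?_, ?_⟩
    · rcases Nat.lt_or_ge k (m+1) with h | h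
      · rw [S_snoc_le g b (by omega)]; exact h1 k (by omega)
      · have : k = m + 1 := by omega
        subst this
        rw [S_snoc_succ, h2]; omega
    · rw [S_snoc_succ, h2]; ring

lemma zeros_snoc {m : ℕ} (g : Fin m → Bool) (b : Bool) :
    zeros (Fin.snoc g b) = zeros g + (if S g m + val b = 0 then 1 else 0) := by
  unfold zeros
  have hI : Finset.Icc 1 (m+1) = insert (m+1) (Finset.Icc 1 m) := by
    ext k; simp only [Finset.mem_Icc, Finset.mem_insert]; omega
  have hfilter : (Finset.Icc 1 m).filter (fun k => S (Fin.snoc g b) k = 0)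
      = (Finset.Icc 1 m).filter (fun k => S g k = 0) := by
    apply Finset.filter_congr
    intro k hk
    rw [S_snoc_le g b (Finset.mem_Icc.mp hk).2]
  rw [hI, Finset.filter_insert, S_snoc_succ]
  by_cases h : S g m + val b = 0
  · rw [if_pos h, if_pos h, Finset.card_insert_of_notMem, hfilter]
    intro hmem
    have := Finset.mem_of_mem_filter _ hmem
    simp only [Finset.mem_Icc] at this; omega
  · rw [if_neg h, if_neg h, hfilter, add_zero]

lemma Mc_neg {m : ℕ} {j : ℤ} (hj : j < 0) : Mc m j = 0 := by
  unfold Mc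
  rw [Finset.card_eq_zero, Finset.filter_eq_empty_iff]
  rintro f - ⟨h1, h2⟩
  have := h1 m le_rfl
  omega

lemma Nc_neg {m : ℕ} {j : ℤ} (r : ℕ) (hj : j < 0) : Nc m j r = 0 := by
  unfold Nc
  rw [Finset.card_eq_zero, Finset.filter_eq_empty_iff]
  rintro f - ⟨⟨h1, h2⟩, -⟩
  have := h1 m le_rfl
  omega

lemma Nc_gt {m : ℕ} {j : ℤ} {r : ℕ} (hr : m < r) : Nc m j r = 0 := by
  unfold Nc
  rw [Finset.card_eq_zero, Finset.filter_eq_empty_iff]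
  rintro f - ⟨-, h2⟩
  have : zeros f ≤ m := by
    have := Finset.card_filter_le (Finset.Icc 1 m) (fun k => S f k = 0)
    simpa [zeros] using this
  omega

lemma Mc_zero (j : ℤ) : Mc 0 j = if j = 0 then 1 else 0 := by
  have hS : ∀ f : Fin 0 → Bool, S f 0 = 0 := by
    intro f; simp [S, psum]
  unfold Mc
  by_cases hj : j = 0
  · subst hj
    rw [if_pos rfl]
    rw [Finset.filter_true_of_mem]
    · simp
    · intro f _
      exact (⟨fun k hk => by interval_cases k; rw [hS], hS f⟩ : (∀ k ≤ 0, 0 ≤ S f k) ∧ S f 0 = 0)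
  · rw [if_neg hj, Finset.card_eq_zero, Finset.filter_eq_empty_iff]
    rintro f - ⟨-, h2⟩
    rw [hS] at h2
    exact hj h2.symm

lemma Nc_zero (j : ℤ) (r : ℕ) : Nc 0 j r = if j = 0 ∧ r = 0 then 1 else 0 := by
  have hS : ∀ f : Fin 0 → Bool, S f 0 = 0 := by
    intro f; simp [S, psum]
  have hz : ∀ f : Fin 0 → Bool, zeros f = 0 := by
    intro f; simp [zeros]
  unfold Nc PM
  by_cases hj : j = 0 ∧ r = 0
  · obtain ⟨rfl, rfl⟩ := hj
    rw [if_pos ⟨rfl, rfl⟩, Finset.filter_true_of_mem]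
    · simp
    · intro f _
      exact ⟨⟨fun k hk => by interval_cases k; rw [hS], hS f⟩, hz f⟩
  · rw [if_neg hj, Finset.card_eq_zero, Finset.filter_eq_empty_iff]
    rintro f - ⟨⟨-, h2⟩, h3⟩
    rw [hS] at h2
    rw [hz] at h3
    exact hj ⟨h2.symm, h3.symm⟩

lemma Mc_succ (m : ℕ) (j : ℤ) :
    Mc (m+1) j = if 0 ≤ j then Mc m (j-1) + Mc m (j+1) else 0 := by
  unfold Mc
  rw [card_filter_snoc]
  by_cases hj : 0 ≤ j
  · rw [if_pos hj]
    congr 1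
    · apply congrArg Finset.card
      apply Finset.filter_congr
      intro g _
      simpa using PM_snoc hj g true
    · apply congrArg Finset.card
      apply Finset.filter_congr
      intro g _
      simpa [sub_neg_eq_add] using PM_snoc hj g false
  · rw [if_neg hj]
    have hfalse : ∀ (b : Bool) (g : Fin m → Bool), ¬ PM j (Fin.snoc g b) := by
      rintro b g ⟨h1, h2⟩
      exact hj (h2 ▸ h1 (m+1) le_rfl)
    rw [Finset.filter_false_of_mem (fun g _ => hfalse true g),
        Finset.filter_false_of_mem (fun g _ => hfalse false g)]
    simp

lemma PMz_snoc {m : ℕ} {j : ℤ} (hj : 0 ≤ j) (g : Fin m → Bool) (b : Bool) (r : ℕ) :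
    (PM j (Fin.snoc g b) ∧ zeros (Fin.snoc g b) = r)
      ↔ (PM (j - val b) g ∧ zeros g + (if j = 0 then 1 else 0) = r) := by
  rw [PM_snoc hj, zeros_snoc]
  constructor
  · rintro ⟨h1, h2⟩
    rw [h1.2] at h2
    rw [sub_add_cancel] at h2
    exact ⟨h1, h2⟩
  · rintro ⟨h1, h2⟩
    rw [h1.2, sub_add_cancel]
    exact ⟨h1, h2⟩

lemma Nc_succ (m : ℕ) (j : ℤ) (r : ℕ) :
    Nc (m+1) j r =
      if j = 0 then (if r = 0 then 0 else Nc m (j-1) (r-1) + Nc m (j+1) (r-1))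
      else if 0 ≤ j then Nc m (j-1) r + Nc m (j+1) r else 0 := by
  unfold Nc
  rw [card_filter_snoc]
  by_cases hj0 : 0 ≤ j
  · by_cases hj : j = 0
    · subst hj
      rw [if_pos rfl]
      rcases r with _ | s
      · rw [if_pos rfl]
        have hfalse : ∀ (b : Bool) (g : Fin m → Bool),
            ¬ (PM 0 (Fin.snoc g b) ∧ zeros (Fin.snoc g b) = 0) := by
          intro b g h
          rw [PMz_snoc le_rfl, if_pos rfl] at h
          omega
        rw [Finset.filter_false_of_mem (fun g _ => hfalse true g),
            Finset.filter_false_of_mem (fun g _ => hfalse false g)]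
        simp
      · rw [if_neg (Nat.succ_ne_zero s)]
        congr 1
        · apply congrArg Finset.card
          apply Finset.filter_congr
          intro g _
          rw [PMz_snoc le_rfl, if_pos rfl]
          constructor
          · rintro ⟨h1, h2⟩
            exact ⟨by simpa using h1, by omega⟩
          · rintro ⟨h1, h2⟩
            exact ⟨by simpa using h1, by omega⟩
        · apply congrArg Finset.card
          apply Finset.filter_congr
          intro g _
          rw [PMz_snoc le_rfl, if_pos rfl]
          constructor
          · rintro ⟨h1, h2⟩
            exact ⟨by simpa [sub_neg_eq_add] using h1, by omega⟩
          · rintro ⟨h1, h2⟩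
            exact ⟨by simpa [sub_neg_eq_add] using h1, by omega⟩
    · rw [if_neg hj, if_pos hj0]
      congr 1
      · apply congrArg Finset.card
        apply Finset.filter_congr
        intro g _
        rw [PMz_snoc hj0, if_neg hj]
        constructor
        · rintro ⟨h1, h2⟩
          exact ⟨by simpa using h1, by omega⟩
        · rintro ⟨h1, h2⟩
          exact ⟨by simpa using h1, by omega⟩
      · apply congrArg Finset.card
        apply Finset.filter_congr
        intro g _
        rw [PMz_snoc hj0, if_neg hj]
        constructor
        · rintro ⟨h1, h2⟩
          exact ⟨by simpa [sub_neg_eq_add] using h1, by omega⟩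
        · rintro ⟨h1, h2⟩
          exact ⟨by simpa [sub_neg_eq_add] using h1, by omega⟩
  · rw [if_neg (by omega : ¬ j = 0), if_neg hj0]
    have hfalse : ∀ (b : Bool) (g : Fin m → Bool),
        ¬ (PM j (Fin.snoc g b) ∧ zeros (Fin.snoc g b) = r) := by
      rintro b g ⟨⟨h1, h2⟩, -⟩
      exact hj0 (h2 ▸ h1 (m+1) le_rfl)
    rw [Finset.filter_false_of_mem (fun g _ => hfalse true g),
        Finset.filter_false_of_mem (fun g _ => hfalse false g)]
    simp

lemma B_nonpos {m : ℕ} {j : ℤ} (hm : 1 ≤ m) (hj : j ≤ 0) : B m j = 0 := by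
  rcases m with _ | m
  · omega
  · rw [B, if_neg (by omega)]

lemma Mc_eq_B : ∀ (m : ℕ) (j : ℤ), 0 ≤ j → Mc m j = B (m+1) (j+1) := by
  intro m
  induction m with
  | zero =>
      intro j hj
      rw [Mc_zero]
      by_cases h : j = 0
      · subst h; norm_num [B]
      · have h2 : ¬ (j + 1 - 1 = 0) := by omega
        have h3 : ¬ (j + 1 + 1 = 0) := by omega
        simp only [B, if_pos (show (1:ℤ) ≤ j+1 by omega), if_neg h, if_neg h2, if_neg h3]
  | succ m ih =>
      intro j hj
      rw [Mc_succ, if_pos hj]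
      rw [show B (m+1+1) (j+1) = B (m+1) j + B (m+1) (j+2) by rw [B, if_pos (by omega)]; ring_nf]
      by_cases h : j = 0
      · subst h
        rw [Mc_neg (by norm_num), B_nonpos (by omega) (by norm_num)]
        have := ih 1 (by norm_num)
        norm_num at this ⊢
        omega
      · have h1 := ih (j-1) (by omega)
        have h2 := ih (j+1) (by omega)
        rw [h1, h2]
        ring_nf

lemma Nc_eq_B : ∀ (m r : ℕ), r ≤ m → ∀ j : ℤ, 0 ≤ j → Nc m j r = B (m - r) (j + (r:ℤ)) := by
  intro m
  induction m with
  | zero =>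
      intro r hr j hj
      interval_cases r
      rw [Nc_zero, B]
      simp only [Nat.cast_zero, add_zero]
      by_cases h : j = 0
      · subst h; simp
      · rw [if_neg (by simpa using h), if_neg h]
  | succ m ih =>
      intro r hr j hj
      rw [Nc_succ]
      by_cases hj0 : j = 0
      · subst hj0
        rw [if_pos rfl]
        rcases r with _ | s
        · rw [if_pos rfl, B_nonpos (by omega) (by norm_num)]
        · rw [if_neg (Nat.succ_ne_zero s)]
          have hNeg : Nc m (0 - 1) s = 0 := Nc_neg s (by norm_num)
          have hPos : Nc m (0 + 1) s = B (m - s) (1 + (s:ℤ)) := by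
            rw [show ((0:ℤ)+1) = 1 by ring]
            exact ih s (by omega) 1 (by norm_num)
          rw [show (s + 1 - 1 : ℕ) = s by omega, hNeg, hPos]
          rw [show (m + 1 - (s+1) : ℕ) = m - s by omega]
          rw [show ((0:ℤ) + (((s:ℕ)+1 : ℕ) : ℤ)) = 1 + (s:ℤ) by push_cast; ring]
          omega
      · rw [if_neg hj0, if_pos hj]
        rcases Nat.lt_or_ge m r with h | h
        · have : r = m + 1 := by omega
          subst this
          rw [Nc_gt (by omega), Nc_gt (by omega)]
          rw [Nat.sub_self, B]
          rw [if_neg (by push_cast; omega)]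
        · have h1 : Nc m (j-1) r = B (m - r) (j - 1 + (r:ℤ)) := ih r h (j-1) (by omega)
          have h2 : Nc m (j+1) r = B (m - r) (j + 1 + (r:ℤ)) := ih r h (j+1) (by omega)
          rw [h1, h2]
          rw [show (m + 1 - r : ℕ) = (m - r) + 1 by omega, B, if_pos (by omega)]
          rw [show (j + (r:ℤ) - 1) = j - 1 + r by ring, show (j + (r:ℤ) + 1) = j + 1 + r by ring]

lemma B_closed : ∀ (m u : ℕ), m ≤ 2*u →
    (B (m+1) (2*(u:ℤ) + 1 - m) : ℤ) = (m.choose u : ℤ) - m.choose (u+1) := by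
  intro m
  induction m with
  | zero =>
      intro u _
      rw [B, if_pos (by push_cast; omega), B, B]
      rcases Nat.eq_zero_or_pos u with h | h
      · subst h; norm_num
      · rw [if_neg (by push_cast; omega), if_neg (by push_cast; omega)]
        simp [Nat.choose_eq_zero_of_lt (by omega : 0 < u),
          Nat.choose_eq_zero_of_lt (by omega : 0 < u + 1)]
  | succ m ih =>
      intro u hu
      obtain ⟨v, rfl⟩ : ∃ v, u = v + 1 := ⟨u - 1, by omega⟩
      have hj : (1:ℤ) ≤ 2*((v:ℤ)+1) + 1 - (m+1) := by push_cast; omega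
      rw [show ((m:ℕ)+1+1) = (m+1)+1 from rfl]
      rw [B, if_pos (by push_cast at hj ⊢; omega)]
      have hright : (B (m+1) (2*((v+1:ℕ):ℤ) + 1 - (m+1) + 1) : ℤ)
          = (m.choose (v+1) : ℤ) - m.choose (v+2) := by
        have := ih (v+1) (by omega)
        rw [← this]
        congr 1
        push_cast
        ring
      have hleft : (B (m+1) (2*((v+1:ℕ):ℤ) + 1 - (m+1) - 1) : ℤ)
          = (m.choose v : ℤ) - m.choose (v+1) := by
        rcases Nat.lt_or_ge m (2*v + 1) with h | h
        · have := ih v (by omega)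
          rw [← this]
          congr 1
          push_cast
          ring
        · have hm : m = 2*v + 1 := by omega
          have harg : (2*((v+1:ℕ):ℤ) + 1 - (m+1) - 1) = 0 := by push_cast; omega
          rw [harg, B_nonpos (by omega) le_rfl]
          have hsymm : m.choose v = m.choose (v+1) := by
            subst hm
            have hcs := Nat.choose_symm (by omega : v + 1 ≤ 2*v+1)
            rw [show (2*v+1) - (v+1) = v by omega] at hcs
            exact hcs
          rw [hsymm]
          push_cast
          ring
      push_cast at hleft hright ⊢
      rw [hleft, hright]
      have p1 : ((m+1).choose (v+1) : ℤ) = m.choose v + m.choose (v+1) := by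
        rw [Nat.choose_succ_succ' m v]; push_cast; ring
      have p2 : ((m+1).choose (v+2) : ℤ) = m.choose (v+1) + m.choose (v+2) := by
        rw [Nat.choose_succ_succ' m (v+1)]; push_cast; ring
      rw [show ((v:ℕ)+1+1) = v + 2 from rfl] at *
      omega

/-! ### Closed forms and real identities -/

lemma Mc_real (n : ℕ) (hn : 1 ≤ n) :
    (Mc (2*n) 0 : ℝ) * ((n:ℝ)+1) = 2 * ((2*n-1).choose (n-1) : ℝ) := by
  have h1 : (Mc (2*n) 0 : ℤ) = ((2*n).choose n : ℤ) - ((2*n).choose (n+1) : ℤ) := by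
    have h3 := B_closed (2*n) n le_rfl
    rw [show (2*(n:ℤ) + 1 - ((2*n:ℕ):ℤ)) = 0 + 1 by push_cast; ring] at h3
    rw [Mc_eq_B (2*n) 0 le_rfl]
    exact_mod_cast h3
  have i2 : ((2*n).choose (n+1) : ℝ) * ((n:ℝ)+1) = ((2*n).choose n : ℝ) * n := by
    have h4 := Nat.choose_succ_right_eq (2*n) n
    rw [show 2*n - n = n by omega] at h4
    exact_mod_cast h4
  have i3 : ((2*n).choose n : ℝ) = 2 * ((2*n-1).choose (n-1) : ℝ) := by
    have e1 : (2*n) = (2*n-1) + 1 := by omega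
    have p : (2*n).choose n = (2*n-1).choose (n-1) + (2*n-1).choose n := by
      calc (2*n).choose n = ((2*n-1)+1).choose ((n-1)+1) := by
              rw [← e1, show (n-1)+1 = n by omega]
        _ = (2*n-1).choose (n-1) + (2*n-1).choose ((n-1)+1) := Nat.choose_succ_succ' _ _
        _ = (2*n-1).choose (n-1) + (2*n-1).choose n := by rw [show (n-1)+1 = n by omega]
    have s : (2*n-1).choose n = (2*n-1).choose (n-1) := by
      have hcs := Nat.choose_symm (show n ≤ 2*n-1 by omega)
      rw [show 2*n-1-n = n-1 by omega] at hcs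
      exact hcs.symm
    rw [p, s]; push_cast; ring
  have h1' : (Mc (2*n) 0 : ℝ) = ((2*n).choose n : ℝ) - ((2*n).choose (n+1) : ℝ) := by
    exact_mod_cast h1
  linear_combination ((n:ℝ)+1) * h1' - i2 + i3

lemma Nc_real (n r : ℕ) (hr : 1 ≤ r) (hn : r + 1 ≤ n) :
    (Nc (2*n) 0 r : ℝ) * (n:ℝ) = (r:ℝ) * ((2*n-r-1).choose (n-1) : ℝ) := by
  have h1 : (Nc (2*n) 0 r : ℤ)
      = ((2*n-r-1).choose (n-1) : ℤ) - ((2*n-r-1).choose ((n-1)+1) : ℤ) := by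
    have h3 := B_closed (2*n-r-1) (n-1) (by omega)
    rw [show (2*n-r-1)+1 = 2*n - r by omega] at h3
    rw [show (2*((n-1:ℕ):ℤ) + 1 - ((2*n-r-1:ℕ):ℤ)) = 0 + (r:ℤ) by omega] at h3
    rw [Nc_eq_B (2*n) r (by omega) 0 le_rfl]
    rw [show (2*n - r : ℕ) = 2*n-r by rfl]
    exact_mod_cast h3
  have i1 : ((2*n-r-1).choose ((n-1)+1) : ℝ) * (n:ℝ)
      = ((2*n-r-1).choose (n-1) : ℝ) * ((n:ℝ) - r) := by
    have h4 := Nat.choose_succ_right_eq (2*n-r-1) (n-1)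
    rw [show (2*n-r-1) - (n-1) = n - r by omega] at h4
    have hcast : ((n - r : ℕ) : ℝ) = (n:ℝ) - r := by
      rw [Nat.cast_sub (by omega : r ≤ n)]
    have h4' : ((2*n-r-1).choose ((n-1)+1) : ℝ) * (((n-1):ℕ)+1 : ℝ)
        = ((2*n-r-1).choose (n-1) : ℝ) * ((n - r : ℕ) : ℝ) := by exact_mod_cast h4
    rw [hcast] at h4'
    rw [show (((n-1):ℕ)+1 : ℝ) = (n:ℝ) by
      rw [show ((n-1:ℕ):ℝ) = (n:ℝ) - 1 by rw [Nat.cast_sub (by omega : 1 ≤ n)]; norm_num]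
      ring] at h4'
    exact h4'
  have h1' : (Nc (2*n) 0 r : ℝ)
      = ((2*n-r-1).choose (n-1) : ℝ) - ((2*n-r-1).choose ((n-1)+1) : ℝ) := by
    exact_mod_cast h1
  linear_combination (n:ℝ) * h1' - i1

lemma chain (n : ℕ) (hn1 : 1 ≤ n) : ∀ i, i + 1 ≤ n →
    ((2*n-1).choose (n-1) : ℝ) * ∏ k ∈ Finset.range i, ((n:ℝ) - k)
      = ((2*n-i-1).choose (n-1) : ℝ) * ∏ k ∈ Finset.range i, (2*(n:ℝ) - (k+1)) := by
  intro i
  induction i with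
  | zero => intro _; simp
  | succ i ih =>
      intro hi
      have IH := ih (by omega)
      rw [Finset.prod_range_succ, Finset.prod_range_succ]
      have link : ((2*n-(i+1)-1).choose (n-1) : ℝ) * (2*(n:ℝ) - (i+1))
          = ((2*n-i-1).choose (n-1) : ℝ) * ((n:ℝ) - i) := by
        have h5 := Nat.choose_mul_succ_eq (2*n-i-2) (n-1)
        rw [show (2*n-i-2) + 1 = 2*n-i-1 by omega,
          show (2*n-i-1) - (n-1) = n - i by omega] at h5
        have h5' : ((2*n-i-2).choose (n-1) : ℝ) * ((2*n-i-1 : ℕ) : ℝ)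
            = ((2*n-i-1).choose (n-1) : ℝ) * ((n - i : ℕ) : ℝ) := by exact_mod_cast h5
        rw [show ((2*n-i-1:ℕ):ℝ) = 2*(n:ℝ) - (i:ℝ) - 1 by
              rw [Nat.cast_sub (by omega : 1 ≤ 2*n-i), Nat.cast_sub (by omega : i ≤ 2*n)]
              push_cast; ring,
            show ((n-i:ℕ):ℝ) = (n:ℝ) - i by rw [Nat.cast_sub (by omega : i ≤ n)]] at h5'
        rw [show (2*n-(i+1)-1 : ℕ) = 2*n-i-2 by omega]
        calc ((2*n-i-2).choose (n-1) : ℝ) * (2*(n:ℝ) - (i+1))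
            = ((2*n-i-2).choose (n-1) : ℝ) * (2*(n:ℝ) - (i:ℝ) - 1) := by ring
          _ = ((2*n-i-1).choose (n-1) : ℝ) * ((n:ℝ) - i) := h5'
      linear_combination ((n:ℝ) - i) * IH
        - (∏ k ∈ Finset.range i, (2*(n:ℝ) - (k+1))) * link

lemma ratio_eq (n r : ℕ) (hr : 1 ≤ r) (hn : r + 1 ≤ n) :
    (0:ℝ) < (Mc (2*n) 0 : ℝ) ∧
    (Nc (2*n) 0 r : ℝ) / (Mc (2*n) 0 : ℝ)
      = (r:ℝ) * (((n:ℝ)+1)/(2*(n:ℝ)))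
          * ∏ k ∈ Finset.range r, (((n:ℝ) - k)/(2*(n:ℝ) - (k+1))) := by
  have hn1 : 1 ≤ n := by omega
  have hX0 : (0:ℝ) < ((2*n-1).choose (n-1) : ℝ) := by
    exact_mod_cast Nat.choose_pos (by omega : n-1 ≤ 2*n-1)
  have hXr : (0:ℝ) < ((2*n-r-1).choose (n-1) : ℝ) := by
    exact_mod_cast Nat.choose_pos (by omega : n-1 ≤ 2*n-r-1)
  have hMc := Mc_real n hn1
  have hNc := Nc_real n r hr hn
  have hch := chain n hn1 r hn
  have hMcpos : (0:ℝ) < (Mc (2*n) 0 : ℝ) := by nlinarith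
  refine ⟨hMcpos, ?_⟩
  have hnpos : (0:ℝ) < (n:ℝ) := by exact_mod_cast hn1
  have hprodD : (0:ℝ) < ∏ k ∈ Finset.range r, (2*(n:ℝ) - (k+1)) := by
    apply Finset.prod_pos
    intro k hk
    have hk' : k < r := Finset.mem_range.mp hk
    have : (k:ℝ) + 1 ≤ (n:ℝ) := by exact_mod_cast (by omega : k + 1 ≤ n)
    nlinarith
  rw [Finset.prod_div_distrib]
  have hprodN : (0:ℝ) < ∏ k ∈ Finset.range r, ((n:ℝ) - k) := by
    apply Finset.prod_pos
    intro k hk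
    have hk' : k < r := Finset.mem_range.mp hk
    have : (k:ℝ) + 1 ≤ (n:ℝ) := by exact_mod_cast (by omega : k + 1 ≤ n)
    nlinarith
  rw [mul_div_assoc', div_eq_div_iff hMcpos.ne' hprodD.ne']
  field_simp
  linear_combination (2 * (∏ k ∈ Finset.range r, (2*(n:ℝ) - (k+1)))) * hNc
    - ((r:ℝ) * (∏ k ∈ Finset.range r, ((n:ℝ) - k))) * hMc
    - 2*(r:ℝ)*hch

/-! ### Limit computation -/

lemma tendsto_ratio (b c : ℝ) :
    Tendsto (fun n : ℕ => ((n:ℝ) + b)/(2*(n:ℝ) + c)) atTop (𝓝 (1/2)) := by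
  have h0 : Tendsto (fun n : ℕ => ((n:ℝ))⁻¹) atTop (𝓝 0) :=
    tendsto_inv_atTop_zero.comp tendsto_natCast_atTop_atTop
  have h1 : Tendsto (fun n : ℕ => (1 + b*((n:ℝ))⁻¹)/(2 + c*((n:ℝ))⁻¹)) atTop
      (𝓝 ((1+0)/(2+0))) := by
    apply Tendsto.div
    · simpa using tendsto_const_nhds.add (tendsto_const_nhds.mul h0)
    · simpa using tendsto_const_nhds.add (tendsto_const_nhds.mul h0)
    · norm_num
  have h2 : (fun n : ℕ => (1 + b*((n:ℝ))⁻¹)/(2 + c*((n:ℝ))⁻¹))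
      =ᶠ[atTop] (fun n : ℕ => ((n:ℝ) + b)/(2*(n:ℝ) + c)) := by
    have hT : Tendsto (fun n : ℕ => 2*(n:ℝ) + c) atTop atTop := by
      apply Filter.tendsto_atTop_add_const_right
      exact (tendsto_natCast_atTop_atTop (R := ℝ)).const_mul_atTop (by norm_num)
    filter_upwards [hT.eventually_gt_atTop 0, eventually_gt_atTop 0] with n hn hn0
    have hne : (n:ℝ) ≠ 0 := by positivity
    have key : 2 + c*((n:ℝ))⁻¹ = (2*(n:ℝ)+c) * ((n:ℝ))⁻¹ := by field_simp
    have h2' : 2 + c*((n:ℝ))⁻¹ ≠ 0 := by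
      rw [key]; exact mul_ne_zero (ne_of_gt hn) (inv_ne_zero hne)
    rw [div_eq_div_iff h2' (ne_of_gt hn)]
    field_simp
  have : ((1:ℝ)+0)/(2+0) = 1/2 := by norm_num
  rw [this] at h1
  exact h1.congr' h2

lemma tendsto_L (r : ℕ) :
    Tendsto (fun n : ℕ => (r:ℝ) * (((n:ℝ)+1)/(2*(n:ℝ)))
        * ∏ k ∈ Finset.range r, (((n:ℝ) - k)/(2*(n:ℝ) - (k+1)))) atTop
      (𝓝 ((r : ℝ) / 2 ^ (r + 1))) := by
  have hpre : Tendsto (fun n : ℕ => (r:ℝ) * (((n:ℝ)+1)/(2*(n:ℝ)))) atTop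
      (𝓝 ((r:ℝ) * (1/2))) := by
    apply tendsto_const_nhds.mul
    have := tendsto_ratio 1 0
    simpa using this
  have hfac : ∀ k : ℕ, Tendsto (fun n : ℕ => ((n:ℝ) - k)/(2*(n:ℝ) - (k+1))) atTop
      (𝓝 (1/2)) := by
    intro k
    have := tendsto_ratio (-(k:ℝ)) (-((k:ℝ)+1))
    simpa [sub_eq_add_neg] using this
  have hprod : Tendsto (fun n : ℕ => ∏ k ∈ Finset.range r,
      (((n:ℝ) - k)/(2*(n:ℝ) - (k+1)))) atTop (𝓝 (∏ _k ∈ Finset.range r, (1/2 : ℝ))) := by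
    apply tendsto_finset_prod
    intro k _
    exact hfac k
  have := hpre.mul hprod
  rw [Finset.prod_const, Finset.card_range] at this
  have heq : (r:ℝ) * (1/2) * (1/2)^r = (r:ℝ) / 2^(r+1) := by
    rw [one_div, inv_pow, pow_succ, div_eq_mul_inv, mul_inv]
    ring
  rwa [heq] at this


/-! ### Probabilistic part -/

section Prob

variable {Ω : Type*} [MeasurableSpace Ω] (P : Measure Ω) [IsProbabilityMeasure P]
    (ξ : ℕ → Ω → ℤ) (hmeas : ∀ k, Measurable (ξ k))
    (hindep : iIndepFun ξ P)
    (p q : ℝ) (hp : 0 < p) (hq : 0 < q) (hpq : p + q = 1)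
    (hd₁ : ∀ k, P {ω | ξ k ω = 1} = ENNReal.ofReal p)
    (hd₂ : ∀ k, P {ω | ξ k ω = -1} = ENNReal.ofReal q)

/-- extension of a boolean tuple. -/
def E {m : ℕ} (ε : Fin m → Bool) (k : ℕ) : Bool := if h : k < m then ε ⟨k, h⟩ else true

include hindep hd₁ hd₂ in
lemma meas_cylinder (m : ℕ) (ε : Fin m → Bool) :
    P {ω | ∀ i : Fin m, ξ i ω = val (ε i)}
      = ∏ i : Fin m, (if ε i then ENNReal.ofReal p else ENNReal.ofReal q) := by
  have hset : {ω | ∀ i : Fin m, ξ i ω = val (ε i)}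
      = ⋂ k ∈ Finset.range m, ξ k ⁻¹' {val (E ε k)} := by
    ext ω
    simp only [Set.mem_setOf_eq, Set.mem_iInter, Finset.mem_range, Set.mem_preimage,
      Set.mem_singleton_iff]
    constructor
    · intro h k hk
      have := h ⟨k, hk⟩
      rw [E, dif_pos hk]
      exact this
    · intro h i
      have := h i i.isLt
      rwa [E, dif_pos i.isLt] at this
  rw [hset, hindep.meas_biInter (fun i _ => ⟨{val (E ε i)}, trivial, rfl⟩)]
  rw [← Fin.prod_univ_eq_prod_range (fun k => P (ξ k ⁻¹' {val (E ε k)}))]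
  apply Finset.prod_congr rfl
  intro i _
  have hE : E ε (i : ℕ) = ε i := by rw [E, dif_pos i.isLt, Fin.eta]
  rw [hE]
  cases h : ε i
  · simp only [val, if_false, Bool.false_eq_true]
    exact hd₂ i
  · simp only [val, if_true]
    exact hd₁ i

include hmeas hindep hp hq hpq hd₁ hd₂ in
lemma meas_event (m : ℕ) (Q : (Fin m → ℤ) → Prop)
    [DecidablePred (fun ε : Fin m → Bool => Q (fun i => val (ε i)))] :
    P {ω | Q (fun i : Fin m => ξ i ω)}
      = ∑ ε ∈ Finset.univ.filter (fun ε : Fin m → Bool => Q (fun i => val (ε i))),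
          ∏ i : Fin m, (if ε i then ENNReal.ofReal p else ENNReal.ofReal q) := by
  classical
  set G : Set Ω := ⋂ i ∈ Finset.range m, ({ω | ξ i ω = 1} ∪ {ω | ξ i ω = -1}) with hGdef
  have hsing : ∀ (k : ℕ) (c : ℤ), MeasurableSet {ω | ξ k ω = c} := by
    intro k c
    exact (hmeas k) (by trivial : MeasurableSet {c})
  have hGc : P Gᶜ = 0 := by
    have h1 : ∀ k : ℕ, P ({ω | ξ k ω = 1} ∪ {ω | ξ k ω = -1}) = 1 := by
      intro k
      rw [measure_union _ (hsing k (-1)), hd₁, hd₂, ← ENNReal.ofReal_add hp.le hq.le, hpq,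
        ENNReal.ofReal_one]
      rw [Set.disjoint_left]
      rintro ω h1 h2
      simp only [Set.mem_setOf_eq] at h1 h2
      omega
    have : Gᶜ = ⋃ i ∈ Finset.range m, ({ω | ξ i ω = 1} ∪ {ω | ξ i ω = -1})ᶜ := by
      rw [hGdef, Set.compl_iInter₂]
    rw [this]
    refine measure_biUnion_null_iff ?_ |>.mpr ?_
    · exact (Finset.range m).countable_toSet
    · intro k _
      rw [measure_compl ((hsing k 1).union (hsing k (-1))) (measure_ne_top _ _), h1 k]
      simp
  set T : Ω → (Fin m → ℤ) := fun ω i => ξ i ω with hT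
  have hsplit : {ω | Q (T ω)} ∩ G
      = ⋃ ε ∈ Finset.univ.filter (fun ε : Fin m → Bool => Q (fun i => val (ε i))),
          {ω | ∀ i : Fin m, ξ i ω = val (ε i)} := by
    ext ω
    simp only [Set.mem_inter_iff, Set.mem_setOf_eq, Set.mem_iUnion, Finset.mem_filter,
      Finset.mem_univ, true_and]
    constructor
    · rintro ⟨hQ, hG⟩
      refine ⟨fun i => decide (ξ i ω = 1), ?_, ?_⟩
      · have hval : (fun i : Fin m => val (decide (ξ (i:ℕ) ω = 1))) = T ω := by
          funext i
          have hmem : ω ∈ {ω | ξ (i:ℕ) ω = 1} ∪ {ω | ξ (i:ℕ) ω = -1} :=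
            Set.mem_iInter₂.mp hG (i : ℕ) (Finset.mem_range.mpr i.isLt)
          rcases hmem with h | h
          · simp only [Set.mem_setOf_eq] at h
            simp [val, h, hT]
          · simp only [Set.mem_setOf_eq] at h
            have : ¬ (ξ (i:ℕ) ω = 1) := by omega
            simp [val, h, this, hT]
        rw [hval]
        exact hQ
      · intro i
        have hmem : ω ∈ {ω | ξ (i:ℕ) ω = 1} ∪ {ω | ξ (i:ℕ) ω = -1} :=
          Set.mem_iInter₂.mp hG (i : ℕ) (Finset.mem_range.mpr i.isLt)
        rcases hmem with h | h
        · simp only [Set.mem_setOf_eq] at h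
          simp [val, h]
        · simp only [Set.mem_setOf_eq] at h
          have : ¬ (ξ (i:ℕ) ω = 1) := by omega
          simp [val, h, this]
    · rintro ⟨ε, hQ, hω⟩
      have hTeq : T ω = fun i => val (ε i) := funext fun i => hω i
      refine ⟨by rw [hTeq]; exact hQ, ?_⟩
      apply Set.mem_iInter₂.mpr
      intro k hk
      have := hω ⟨k, Finset.mem_range.mp hk⟩
      cases h : ε ⟨k, Finset.mem_range.mp hk⟩
      · right; rw [h] at this; simpa [val] using this
      · left; rw [h] at this; simpa [val] using this
  have hPeq : P {ω | Q (T ω)} = P ({ω | Q (T ω)} ∩ G) := by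
    apply le_antisymm
    · calc P {ω | Q (T ω)} ≤ P (({ω | Q (T ω)} ∩ G) ∪ Gᶜ) := by
            apply measure_mono
            intro ω h
            by_cases hg : ω ∈ G
            · exact Or.inl ⟨h, hg⟩
            · exact Or.inr hg
        _ ≤ P ({ω | Q (T ω)} ∩ G) + P Gᶜ := measure_union_le _ _
        _ = P ({ω | Q (T ω)} ∩ G) := by rw [hGc, add_zero]
    · exact measure_mono Set.inter_subset_left
  rw [hPeq, hsplit, measure_biUnion_finset ?_ ?_]
  · apply Finset.sum_congr rfl
    intro ε _
    exact meas_cylinder P ξ hindep p q hd₁ hd₂ m ε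
  · intro ε hε ε' hε' hne
    simp only [Function.onFun]
    rw [Set.disjoint_left]
    intro ω h1 h2
    apply hne
    funext i
    apply val_injective
    rw [← h1 i, ← h2 i]
  · intro ε _
    have : {ω | ∀ i : Fin m, ξ i ω = val (ε i)} = ⋂ i : Fin m, {ω | ξ (i:ℕ) ω = val (ε i)} := by
      ext ω; simp [Set.mem_iInter]
    rw [this]
    exact MeasurableSet.iInter (fun i => hsing i (val (ε i)))

/-- the denominator event predicate. -/
def Qden (m : ℕ) (v : Fin m → ℤ) : Prop := (∀ k ≤ m, 0 ≤ psum v k) ∧ psum v m = 0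

/-- the numerator event predicate. -/
def Qnum (m r : ℕ) (v : Fin m → ℤ) : Prop :=
  Qden m v ∧ ((Finset.Icc 1 m).filter (fun k => psum v k = 0)).card = r

instance (m : ℕ) : DecidablePred (fun ε : Fin m → Bool => Qden m (fun i => val (ε i))) :=
  fun _ => instDecidableAnd (dp := Nat.decidableBallLE m _) (dq := decEq _ _)

instance (m r : ℕ) : DecidablePred (fun ε : Fin m → Bool => Qnum m r (fun i => val (ε i))) :=
  fun _ => instDecidableAnd
    (dp := instDecidableAnd (dp := Nat.decidableBallLE m _) (dq := decEq _ _))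
    (dq := decEq _ _)

lemma walk_eq_psum (m k : ℕ) (hk : k ≤ m) (ω : Ω) :
    psum (fun i : Fin m => ξ i ω) k = walk1 ξ k ω := by
  unfold psum walk1
  rw [Fin.sum_univ_eq_sum_range (fun j => if j < k then ξ j ω else 0)]
  rw [← Finset.sum_filter]
  apply Finset.sum_congr _ (fun j _ => rfl)
  ext j
  simp only [Finset.mem_filter, Finset.mem_range]
  omega

lemma prod_weight (n : ℕ) (ε : Fin (2*n) → Bool) (hε : S ε (2*n) = 0) :
    ∏ i : Fin (2*n), (if ε i then ENNReal.ofReal p else ENNReal.ofReal q)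
      = ENNReal.ofReal p ^ n * ENNReal.ofReal q ^ n := by
  have hS2 : S ε (2*n)
      = 2 * ((Finset.univ.filter (fun i : Fin (2*n) => ε i = true)).card : ℤ) - (2*n : ℤ) := by
    unfold S psum
    rw [Finset.sum_congr rfl (fun i _ => if_pos i.isLt)]
    have h2 : ∀ i : Fin (2*n), val (ε i) = 2 * (if ε i = true then (1:ℤ) else 0) - 1 := by
      intro i; cases ε i <;> simp [val]
    rw [Finset.sum_congr rfl (fun i _ => h2 i)]
    rw [Finset.sum_sub_distrib, ← Finset.mul_sum, Finset.sum_boole, Finset.sum_const]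
    simp [Finset.card_univ]
  have hcard : (Finset.univ.filter (fun i : Fin (2*n) => ε i = true)).card = n := by
    rw [hε] at hS2
    omega
  have hcard2 : (Finset.univ.filter (fun i : Fin (2*n) => ¬ (ε i = true))).card = n := by
    have h3 := Finset.card_filter_add_card_filter_not
      (s := (Finset.univ : Finset (Fin (2*n)))) (p := fun i => ε i = true)
    rw [Finset.card_univ, Fintype.card_fin] at h3
    omega
  rw [Finset.prod_ite (fun _ => ENNReal.ofReal p) (fun _ => ENNReal.ofReal q),
    Finset.prod_const, Finset.prod_const, hcard, hcard2]

include hmeas hindep hp hq hpq hd₁ hd₂ in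
lemma cond_eq (n r : ℕ) (hMc : Mc (2*n) 0 ≠ 0) :
    ((P[|stays1 ξ (2*n) ∩ {ω | walk1 ξ (2*n) ω = 0}]) {ω | visits ξ (2*n) ω = r}).toReal
      = (Nc (2*n) 0 r : ℝ) / (Mc (2*n) 0 : ℝ) := by
  have hwalk : ∀ k, Measurable (walk1 ξ k) := fun k =>
    Finset.measurable_sum _ (fun i _ => hmeas i)
  have hsmeas : MeasurableSet (stays1 ξ (2*n) ∩ {ω | walk1 ξ (2*n) ω = 0}) := by
    apply MeasurableSet.inter
    · have hst : stays1 ξ (2*n) = ⋂ k, ⋂ (_ : k ≤ 2*n), {ω | 0 ≤ walk1 ξ k ω} := by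
        ext ω; simp [stays1, Set.mem_iInter]
      rw [hst]
      exact MeasurableSet.iInter fun k => MeasurableSet.iInter fun _ =>
        (hwalk k) (by trivial : MeasurableSet {x : ℤ | 0 ≤ x})
    · exact (hwalk (2*n)) (by trivial : MeasurableSet ({0} : Set ℤ))
  have hden : stays1 ξ (2*n) ∩ {ω | walk1 ξ (2*n) ω = 0}
      = {ω | Qden (2*n) (fun i : Fin (2*n) => ξ i ω)} := by
    ext ω
    simp only [stays1, Set.mem_inter_iff, Set.mem_setOf_eq, Qden]
    constructor
    · rintro ⟨h1, h2⟩
      refine ⟨fun k hk => ?_, ?_⟩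
      · rw [walk_eq_psum ξ (2*n) k hk ω]; exact h1 k hk
      · rw [walk_eq_psum ξ (2*n) (2*n) le_rfl ω]; exact h2
    · rintro ⟨h1, h2⟩
      refine ⟨fun k hk => ?_, ?_⟩
      · rw [← walk_eq_psum ξ (2*n) k hk ω]; exact h1 k hk
      · rw [← walk_eq_psum ξ (2*n) (2*n) le_rfl ω]; exact h2
  have hv : ∀ ω : Ω, visits ξ (2*n) ω
      = ((Finset.Icc 1 (2*n)).filter
          (fun k => psum (fun i : Fin (2*n) => ξ i ω) k = 0)).card := by
    intro ω
    unfold visits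
    apply congrArg
    apply Finset.filter_congr
    intro k hk
    rw [walk_eq_psum ξ (2*n) k (Finset.mem_Icc.mp hk).2 ω]
  have hnum : (stays1 ξ (2*n) ∩ {ω | walk1 ξ (2*n) ω = 0}) ∩ {ω | visits ξ (2*n) ω = r}
      = {ω | Qnum (2*n) r (fun i : Fin (2*n) => ξ i ω)} := by
    ext ω
    rw [Set.mem_inter_iff]
    constructor
    · rintro ⟨h1, h2⟩
      refine ⟨(Set.ext_iff.mp hden ω).mp h1, ?_⟩
      rw [← hv ω]
      exact h2
    · rintro ⟨h1, h2⟩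
      refine ⟨(Set.ext_iff.mp hden ω).mpr h1, ?_⟩
      show visits ξ (2*n) ω = r
      rw [hv ω]
      exact h2
  have hPden : P (stays1 ξ (2*n) ∩ {ω | walk1 ξ (2*n) ω = 0})
      = (Mc (2*n) 0 : ℕ) * (ENNReal.ofReal p ^ n * ENNReal.ofReal q ^ n) := by
    rw [hden, meas_event P ξ hmeas hindep p q hp hq hpq hd₁ hd₂ (2*n) (Qden (2*n))]
    have hfs : Finset.univ.filter (fun ε : Fin (2*n) → Bool => Qden (2*n) (fun i => val (ε i)))
        = Finset.univ.filter (PM (m := 2*n) 0) := Finset.filter_congr (fun ε _ => Iff.rfl)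
    rw [hfs]
    rw [Finset.sum_congr rfl
      (fun ε hε => prod_weight p q n ε (Finset.mem_filter.mp hε).2.2)]
    rw [Finset.sum_const, Mc, nsmul_eq_mul]
  have hPnum : P ((stays1 ξ (2*n) ∩ {ω | walk1 ξ (2*n) ω = 0}) ∩ {ω | visits ξ (2*n) ω = r})
      = (Nc (2*n) 0 r : ℕ) * (ENNReal.ofReal p ^ n * ENNReal.ofReal q ^ n) := by
    rw [hnum, meas_event P ξ hmeas hindep p q hp hq hpq hd₁ hd₂ (2*n) (Qnum (2*n) r)]
    have hfs : Finset.univ.filter (fun ε : Fin (2*n) → Bool => Qnum (2*n) r (fun i => val (ε i)))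
        = Finset.univ.filter (fun f : Fin (2*n) → Bool => PM 0 f ∧ zeros f = r) :=
      Finset.filter_congr (fun ε _ => Iff.rfl)
    rw [hfs]
    rw [Finset.sum_congr rfl
      (fun ε hε => prod_weight p q n ε (Finset.mem_filter.mp hε).2.1.2)]
    rw [Finset.sum_const, Nc, nsmul_eq_mul]
  rw [cond_apply hsmeas P, hPnum, hPden]
  have hwne : (ENNReal.ofReal p ^ n * ENNReal.ofReal q ^ n) ≠ 0 := by
    apply mul_ne_zero <;> apply pow_ne_zero <;> simp [ENNReal.ofReal_eq_zero] <;> linarith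
  have hwtop : (ENNReal.ofReal p ^ n * ENNReal.ofReal q ^ n) ≠ ⊤ :=
    ENNReal.mul_ne_top (ENNReal.pow_ne_top ENNReal.ofReal_ne_top)
      (ENNReal.pow_ne_top ENNReal.ofReal_ne_top)
  rw [ENNReal.toReal_mul, ENNReal.toReal_inv, ENNReal.toReal_mul, ENNReal.toReal_mul]
  simp only [ENNReal.toReal_natCast]
  have hwR : (0:ℝ) < (ENNReal.ofReal p ^ n * ENNReal.ofReal q ^ n).toReal := by
    rw [ENNReal.toReal_mul, ENNReal.toReal_pow, ENNReal.toReal_pow,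
      ENNReal.toReal_ofReal hp.le, ENNReal.toReal_ofReal hq.le]
    positivity
  have hMcR : (0:ℝ) < (Mc (2*n) 0 : ℝ) := by
    exact_mod_cast Nat.pos_of_ne_zero hMc
  rw [ENNReal.toReal_mul] at hwR
  field_simp
  simp only [ENNReal.toReal_mul, ENNReal.toReal_natCast]
  ring

end Prob

end StmtAux

/-- Non-negative bridge case: for every `p ∈ (0,1)` and every `r ≥ 1`, along even times,
`P(N_n = r | τ > n, S_n = 0) → r/2^{r+1}`; the limit does not depend on `p`. -/
theorem stmt12
    {Ω : Type*} [MeasurableSpace Ω] (P : Measure Ω) [IsProbabilityMeasure P]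
    (ξ : ℕ → Ω → ℤ) (hmeas : ∀ k, Measurable (ξ k))
    (hindep : iIndepFun ξ P)
    (p q : ℝ) (hp : 0 < p) (hq : 0 < q) (hpq : p + q = 1)
    (hd₁ : ∀ k, P {ω | ξ k ω = 1} = ENNReal.ofReal p)
    (hd₂ : ∀ k, P {ω | ξ k ω = -1} = ENNReal.ofReal q)
    (r : ℕ) (hr : 1 ≤ r) :
    Tendsto
      (fun n : ℕ =>
        ((P[|stays1 ξ (2 * n) ∩ {ω | walk1 ξ (2 * n) ω = 0}])
          {ω | visits ξ (2 * n) ω = r}).toReal)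
      atTop (𝓝 ((r : ℝ) / 2 ^ (r + 1))) := by
  apply Filter.Tendsto.congr' _ (StmtAux.tendsto_L r)
  filter_upwards [eventually_ge_atTop (r+1)] with n hn
  obtain ⟨hpos, heq⟩ := StmtAux.ratio_eq n r hr hn
  have hMcne : StmtAux.Mc (2*n) 0 ≠ 0 := by
    intro h0
    rw [h0] at hpos
    simp at hpos
  rw [StmtAux.cond_eq P ξ hmeas hindep p q hp hq hpq hd₁ hd₂ n r hMcne]
  exact heq.symm

end
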